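/- Let A be a commutative unital algebra over a field k of characteristic 0, let Ω be a differential graded algebra receiving a map d : A → Ω^1 (Kähler differentials or de Rham forms), and let c be a linear functional on Ω^m. Define the Hochschild m-cochain ι(c)(a_0,…,a_m) = (1/m!) c(a_0 da_1 ⋯ da_m). Then b(ι(c)) = 0, i.e. ι(c) is a Hochschild cocycle, using only the Leibniz rule d(ab) = a db + b da and commutativity of A. -/

import Mathlib

/-- The Hochschild coboundary on cochains:
`(bφ)(a₀,…,a_{m+1}) = ∑_{i=0}^{m} (-1)^i φ(a₀,…,a_i a_{i+1},…,a_{m+1})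
 + (-1)^{m+1} φ(a_{m+1} a₀, a₁, …, a_m)`. -/
def hb {A M : Type*} [Ring A] [AddCommGroup M] {n : ℕ}
    (φ : (Fin (n + 1) → A) → M) : (Fin (n + 2) → A) → M := fun a =>
  (∑ i : Fin (n + 1), ((-1 : ℤ) ^ (i : ℕ)) •
      φ (fun j : Fin (n + 1) =>
        if (j : ℕ) < (i : ℕ) then a j.castSucc
        else if (j : ℕ) = (i : ℕ) then a j.castSucc * a j.succ
        else a j.succ)) +
    ((-1 : ℤ) ^ (n + 1)) •
      φ (fun j : Fin (n + 1) =>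
        if (j : ℕ) = 0 then a (Fin.last (n + 1)) * a 0 else a j.castSucc)

open Fin.NatCast

/-- for a commutative unital algebra `A`, a differential-forms
type algebra `Ω` receiving `A` centrally, a Leibniz-rule map `d : A → Ω`, and
a linear functional `c` on `Ω`, the cochain
`ι(c)(a₀,…,a_m) = (1/m!) c(a₀ · d a₁ ⋯ d a_m)` is a Hochschild cocycle:
`b(ι(c)) = 0`. -/
theorem stmt11 {k A Ω : Type*} [Field k] [CharZero k]
    [CommRing A] [Algebra k A] [Ring Ω] [Algebra k Ω] [Algebra A Ω]
    [IsScalarTower k A Ω]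
    (d : A → Ω)
    (hLeib : ∀ a b : A,
      d (a * b) = algebraMap A Ω a * d b + algebraMap A Ω b * d a)
    (c : Ω →ₗ[k] k) (m : ℕ) :
    hb (fun a : Fin (m + 1) → A =>
        ((m.factorial : k))⁻¹ *
          c (algebraMap A Ω (a 0) *
            (List.ofFn fun i : Fin m => d (a i.succ)).prod))
      = fun _ => 0 := by
  funext a
  simp only [hb]
  set C : k := ((m.factorial : k))⁻¹ with hC
  set g : ℕ → Ω := fun l => d (a l) with hg
  -- the basic cochain terms
  set T : ℕ → k := fun j =>
    c (algebraMap A Ω (a 0 * a (↑(j+1))) *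
      (((List.range' 1 j).map g).prod * ((List.range' (j+2) (m-j)).map g).prod)) with hT
  -- helper: identify `List.ofFn` lists with mapped ranges
  have haux : ∀ (q s : ℕ) (f : Fin q → Ω),
      (∀ (t : ℕ) (ht : t < q), f ⟨t, ht⟩ = g (s + t)) →
      List.ofFn f = (List.range' s q).map g := by
    intro q s f hf
    apply List.ext_getElem
    · simp
    · intro t h1 h2
      simp only [List.getElem_ofFn, List.getElem_map, List.getElem_range']
      rw [hf t (by simpa using h1)]
      ring_nf
  -- the summand as a function of a natural number
  set F : ℕ → k := fun i => ((-1 : ℤ) ^ i) •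
      (C * c (algebraMap A Ω
          ((fun j : Fin (m+1) =>
            if (j : ℕ) < i then a j.castSucc
            else if (j : ℕ) = i then a j.castSucc * a j.succ
            else a j.succ) 0) *
        (List.ofFn fun l : Fin m => d
          ((fun j : Fin (m+1) =>
            if (j : ℕ) < i then a j.castSucc
            else if (j : ℕ) = i then a j.castSucc * a j.succ
            else a j.succ) l.succ)).prod)) with hF
  have hsum : (∑ i : Fin (m + 1), ((-1 : ℤ) ^ (i : ℕ)) •
      (C * c (algebraMap A Ω
          ((fun j : Fin (m+1) =>
            if (j : ℕ) < (i : ℕ) then a j.castSucc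
            else if (j : ℕ) = (i : ℕ) then a j.castSucc * a j.succ
            else a j.succ) 0) *
        (List.ofFn fun l : Fin m => d
          ((fun j : Fin (m+1) =>
            if (j : ℕ) < (i : ℕ) then a j.castSucc
            else if (j : ℕ) = (i : ℕ) then a j.castSucc * a j.succ
            else a j.succ) l.succ)).prod)))
      = ∑ i ∈ Finset.range (m+1), F i := by
    rw [← Fin.sum_univ_eq_sum_range F (m+1)]
  have hF0 : F 0 = C * T 0 := by
    have hl : (List.ofFn fun l : Fin m => d
        ((fun j : Fin (m+1) =>
          if (j : ℕ) < 0 then a j.castSucc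
          else if (j : ℕ) = 0 then a j.castSucc * a j.succ
          else a j.succ) l.succ)) = (List.range' 2 m).map g := by
      apply haux
      intro t ht
      simp only [Fin.succ_mk, Fin.val_succ, Fin.val_mk]
      rw [if_neg (by omega), if_neg (by omega)]
      simp only [hg]
      congr 2
      apply Fin.ext
      simp only [Fin.val_succ, Fin.val_mk, Fin.val_natCast]
      rw [Nat.mod_eq_of_lt (by omega)]
      omega
    simp only [hF, hT]
    rw [hl]
    simp [Fin.isValue]
  have key : ∀ (x y : A) (u v : Ω),
      c (algebraMap A Ω x * (u * (algebraMap A Ω y * v)))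
        = c (algebraMap A Ω (x * y) * (u * v)) := by
    intro x y u v
    rw [map_mul (algebraMap A Ω) x y, mul_assoc]
    congr 2
    rw [← mul_assoc, ← Algebra.commutes, mul_assoc]
  have hFs : ∀ p, p < m → F (p+1) = (-1:k)^(p+1) * (C * (T p + T (p+1))) := by
    intro p hp
    have hl : (List.ofFn fun l : Fin m => d
        ((fun j : Fin (m+1) =>
          if (j : ℕ) < p+1 then a j.castSucc
          else if (j : ℕ) = p+1 then a j.castSucc * a j.succ
          else a j.succ) l.succ)) =
        ((List.range' 1 p).map g) ++ (d (a (↑(p+1) : Fin (m+2)) * a (↑(p+2) : Fin (m+2))) ::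
          ((List.range' (p+3) (m-p-1)).map g)) := by
      apply List.ext_getElem
      · simp
        omega
      · intro t h1 h2
        have htm : t < m := by simpa using h1
        rw [List.getElem_ofFn, List.getElem_append]
        simp only [List.length_map, List.length_range', Fin.succ_mk, Fin.val_succ, Fin.val_mk]
        rcases lt_trichotomy t p with h | h | h
        · rw [dif_pos (by omega)]
          rw [List.getElem_map, List.getElem_range']
          rw [if_pos (by omega)]
          simp only [hg]
          congr 2
          apply Fin.ext
          simp only [Fin.coe_castSucc, Fin.val_succ, Fin.val_mk, Fin.val_natCast]
          rw [Nat.mod_eq_of_lt (by omega)]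
          omega
        · subst h
          rw [dif_neg (by omega)]
          simp only [List.length_map, List.length_range', Nat.sub_self, List.getElem_cons_zero]
          rw [if_neg (by omega)]
          simp only [if_true, ite_true]
          congr 2 <;>
          · congr 1
            apply Fin.ext
            simp only [Fin.coe_castSucc, Fin.val_succ, Fin.val_mk, Fin.val_natCast]
            rw [Nat.mod_eq_of_lt (by omega)]
        · rw [dif_neg (by omega)]
          obtain ⟨w, hw⟩ : ∃ w, t - p = w + 1 := ⟨t - p - 1, by omega⟩
          simp only [hw, List.getElem_cons_succ, List.getElem_map, List.getElem_range']
          rw [if_neg (by omega), if_neg (by omega)]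
          simp only [hg]
          congr 2
          apply Fin.ext
          simp only [Fin.val_succ, Fin.val_mk, Fin.val_natCast]
          rw [Nat.mod_eq_of_lt (by omega)]
          omega
    have hr1 : List.range' (p+2) (m-p) = (p+2) :: List.range' (p+3) (m-p-1) := by
      conv_lhs => rw [show m - p = (m - p - 1) + 1 from by omega]
      rw [List.range'_succ]
    have hr2 : List.range' 1 (p+1) = List.range' 1 p ++ [p+1] := by
      rw [List.range'_concat]
      congr 1
      simp
      omega
    have e1 : p+1+1 = p+2 := by omega
    have e2 : p+1+2 = p+3 := by omega
    have e3 : m - (p+1) = m - p - 1 := by omega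
    simp only [hF, hT, e1, e2, e3]
    simp only [Fin.isValue, Fin.val_zero, Nat.zero_lt_succ, if_true, ite_true, Fin.castSucc_zero]
    rw [hl, hr1, hr2]
    rw [hLeib]
    simp only [hg, List.map_append, List.map_cons, List.map_nil, List.prod_append,
      List.prod_cons, List.prod_nil, mul_one]
    simp only [mul_add, add_mul, mul_assoc, map_add]
    rw [key, key]
    push_cast [zsmul_eq_mul]
    ring
  have hlast : (((-1 : ℤ) ^ (m + 1)) •
      (C * c (algebraMap A Ω
          ((fun j : Fin (m+1) =>
            if (j : ℕ) = 0 then a (Fin.last (m + 1)) * a 0 else a j.castSucc) 0) *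
        (List.ofFn fun l : Fin m => d
          ((fun j : Fin (m+1) =>
            if (j : ℕ) = 0 then a (Fin.last (m + 1)) * a 0 else a j.castSucc) l.succ)).prod)))
      = (-1:k)^(m+1) * (C * T m) := by
    have hl : (List.ofFn fun l : Fin m => d
        ((fun j : Fin (m+1) =>
          if (j : ℕ) = 0 then a (Fin.last (m + 1)) * a 0 else a j.castSucc) l.succ))
        = (List.range' 1 m).map g := by
      apply haux
      intro t ht
      simp only [Fin.succ_mk, Fin.val_succ, Fin.val_mk]
      rw [if_neg (by omega)]
      simp only [hg]
      congr 2
      apply Fin.ext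
      simp only [Fin.coe_castSucc, Fin.val_succ, Fin.val_mk, Fin.val_natCast]
      rw [Nat.mod_eq_of_lt (by omega)]
      omega
    rw [hl]
    simp only [hT, Fin.isValue, Fin.val_zero, if_pos rfl]
    have hidx : a (Fin.last (m+1)) = a ((↑(m+1) : Fin (m+2))) := by
      congr 1
      apply Fin.ext
      simp only [Fin.val_last, Fin.val_natCast]
      rw [Nat.mod_eq_of_lt (by omega)]
    rw [hidx, mul_comm (a ((↑(m+1) : Fin (m+2)))) (a 0)]
    simp [zsmul_eq_mul, Nat.sub_self, mul_one]
  rw [hsum, hlast, Finset.sum_range_succ', hF0]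
  have : ∀ p ∈ Finset.range m, F (p+1) =
      ((-1:k)^(p+1) * (C * T (p+1)) - (-1:k)^p * (C * T p)) := by
    intro p hp
    rw [hFs p (Finset.mem_range.mp hp), pow_succ]
    ring
  rw [Finset.sum_congr rfl this, Finset.sum_range_sub (fun p => (-1:k)^p * (C * T p))]
  rw [pow_succ]
  ring
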